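/- Let G be a connected n-vertex graph and B ⊆ V(G). Then G contains a simple path of length at least min{n − |B| − 1, 2δ(G − B)}. -/

import Mathlib

open SimpleGraph

set_option linter.unusedSectionVars false
set_option maxHeartbeats 1000000

namespace StmtAux

variable {V : Type*} [Fintype V] [DecidableEq V]


lemma getVert_inj {G : SimpleGraph V} {u v : V} (p : G.Walk u v) (hp : p.IsPath) :
    ∀ i j, i ≤ p.length → j ≤ p.length → p.getVert i = p.getVert j → i = j := by
  induction p with
  | nil => intro i j hi hj _; simp at hi hj; omega
  | cons h q ih =>
    rw [Walk.cons_isPath_iff] at hp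
    intro i j hi hj hij
    match i, j with
    | 0, 0 => rfl
    | 0, j+1 =>
      exfalso
      apply hp.2
      rw [Walk.mem_support_iff_exists_getVert]
      refine ⟨j, ?_, by simpa using hj⟩
      simpa [Walk.getVert_cons_succ, Walk.getVert_zero] using hij.symm
    | i+1, 0 =>
      exfalso
      apply hp.2
      rw [Walk.mem_support_iff_exists_getVert]
      refine ⟨i, ?_, by simpa using hi⟩
      simpa [Walk.getVert_cons_succ, Walk.getVert_zero] using hij
    | i+1, j+1 =>
      have := ih hp.1 i j (by simpa using hi) (by simpa using hj)
        (by simpa [Walk.getVert_cons_succ] using hij)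
      omega

lemma exists_terminal_path (H : SimpleGraph V) (u : V) :
    ∃ (w : V) (p : H.Walk w u), p.IsPath ∧ ∀ x, H.Adj w x → x ∈ p.support := by
  classical
  set M : Set ℕ := {l | ∃ (w : V) (p : H.Walk w u), p.IsPath ∧ p.length = l} with hM
  have hne : M.Nonempty := ⟨0, u, Walk.nil, Walk.IsPath.nil, rfl⟩
  have hbdd : BddAbove M := by
    refine ⟨Fintype.card V, ?_⟩
    rintro l ⟨w, p, hp, rfl⟩
    exact hp.length_lt.le
  obtain ⟨w, p, hp, hlen⟩ := Nat.sSup_mem hne hbdd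
  refine ⟨w, p, hp, ?_⟩
  intro x hx
  by_contra hxs
  have hmem : p.length + 1 ∈ M := ⟨x, Walk.cons hx.symm p, hp.cons hxs, by simp⟩
  have h2 := le_csSup hbdd hmem
  rw [← hlen] at h2
  omega



lemma exists_prefix (H : SimpleGraph V) (S : List V) :
    ∀ {x c : V} (w : H.Walk x c), w.IsPath → x ∉ S → c ∈ S →
    ∃ (y : V) (r : H.Walk x y), r.IsPath ∧ y ∈ S ∧ (∀ z ∈ r.support, z ∈ S → z = y) ∧
      (∀ z ∈ r.support, z ∈ w.support) ∧ 1 ≤ r.length := by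
  intro x c w
  induction w with
  | nil => intro _ hx hc; exact absurd hc hx
  | @cons x d c h q ih =>
    intro hw hx hc
    rw [Walk.cons_isPath_iff] at hw
    by_cases hd : d ∈ S
    · refine ⟨d, Walk.cons h Walk.nil, ?_, hd, ?_, ?_, by simp⟩
      · simp only [Walk.cons_isPath_iff, Walk.isPath_iff_eq_nil, Walk.support_nil,
          List.mem_singleton]
        refine ⟨trivial, ?_⟩
        rintro rfl
        exact hx hd
      · intro z hz hzS
        simp only [Walk.support_cons, Walk.support_nil, List.mem_cons, List.mem_singleton,
          List.not_mem_nil, or_false] at hz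
        rcases hz with rfl | rfl
        · exact absurd hzS hx
        · rfl
      · intro z hz
        simp only [Walk.support_cons, Walk.support_nil, List.mem_cons, List.mem_singleton,
          List.not_mem_nil, or_false] at hz
        rw [Walk.support_cons]
        rcases hz with rfl | rfl
        · exact List.mem_cons_self
        · exact List.mem_cons_of_mem _ (Walk.start_mem_support q)
    · obtain ⟨y, r, hr, hyS, hfirst, hsub, hlen⟩ := ih hw.1 hd hc
      refine ⟨y, Walk.cons h r, hr.cons (fun hxr => hw.2 (hsub x hxr)), hyS, ?_, ?_, ?_⟩
      · intro z hz hzS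
        rw [Walk.support_cons] at hz
        rcases List.mem_cons.mp hz with rfl | hz'
        · exact absurd hzS hx
        · exact hfirst z hz' hzS
      · intro z hz
        rw [Walk.support_cons] at hz ⊢
        rcases List.mem_cons.mp hz with rfl | hz'
        · exact List.mem_cons_self
        · exact List.mem_cons_of_mem _ (hsub z hz')
      · simp only [Walk.length_cons]; omega

lemma rotate' {H : SimpleGraph V} {v0 t s vk y : V} (A1 : H.Walk v0 y) (A2 : H.Walk y t)
    (hts : H.Adj t s) (Q2 : H.Walk s vk)
    (hP : ((A1.append A2).append (Walk.cons hts Q2)).IsPath)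
    (hs : H.Adj v0 s) (ht : H.Adj vk t) :
    ∃ (z : V) (W : H.Walk y z), W.IsPath ∧
      W.length = (A1.append A2).length + Q2.length + 1 ∧
      W.support.Perm ((A1.append A2).append (Walk.cons hts Q2)).support := by
  cases A2 with
  | nil =>
    refine ⟨vk, A1.reverse.append (Walk.cons hs Q2), ?_, ?_, ?_⟩
    case refine_3 =>
      have hperm : (A1.reverse.append (Walk.cons hs Q2)).support.Perm
          ((A1.append Walk.nil).append (Walk.cons hts Q2)).support := by
        rw [Walk.support_append, Walk.support_append, Walk.append_nil]
        simp only [Walk.support_reverse, Walk.support_cons, List.tail_cons]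
        exact (List.reverse_perm _).append (List.Perm.refl _)
      exact hperm
    case refine_2 => simp only [Walk.length_append, Walk.length_reverse, Walk.length_cons, Walk.length_nil]; omega
    case refine_1 =>
      rw [Walk.isPath_def]
      have hperm : (A1.reverse.append (Walk.cons hs Q2)).support.Perm
          ((A1.append Walk.nil).append (Walk.cons hts Q2)).support := by
        rw [Walk.support_append, Walk.support_append, Walk.append_nil]
        simp only [Walk.support_reverse, Walk.support_cons, List.tail_cons]
        exact (List.reverse_perm _).append (List.Perm.refl _)
      exact hperm.nodup_iff.mpr (Walk.isPath_def _ |>.mp hP)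
  | cons h2 A2' =>
    rename_i d
    refine ⟨d, A1.reverse.append (Walk.cons hs (Q2.append (Walk.cons ht A2'.reverse))), ?_, ?_, ?_⟩
    case refine_2 =>
      simp only [Walk.length_append, Walk.length_reverse, Walk.length_cons]
      omega
    case refine_3 =>
      rw [← Multiset.coe_eq_coe]
      rw [Walk.support_append, Walk.support_append]
      simp only [Walk.support_reverse, Walk.support_cons, List.tail_cons, Walk.support_append,
        Walk.tail_support_append]
      simp only [← Multiset.coe_add, ← Multiset.coe_reverse, Multiset.coe_reverse]
      abel
    case refine_1 =>
      rw [Walk.isPath_def]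
      have hperm : (A1.reverse.append (Walk.cons hs (Q2.append (Walk.cons ht A2'.reverse)))).support.Perm
          ((A1.append (Walk.cons h2 A2')).append (Walk.cons hts Q2)).support := by
        rw [← Multiset.coe_eq_coe]
        rw [Walk.support_append, Walk.support_append]
        simp only [Walk.support_reverse, Walk.support_cons, List.tail_cons, Walk.support_append,
          Walk.tail_support_append]
        simp only [← Multiset.coe_add, ← Multiset.coe_reverse, Multiset.coe_reverse]
        abel
      exact hperm.nodup_iff.mpr (Walk.isPath_def _ |>.mp hP)






lemma rotate {H : SimpleGraph V} {v0 t s vk y : V} (Q1 : H.Walk v0 t) (hts : H.Adj t s)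
    (Q2 : H.Walk s vk) (hP : (Q1.append (Walk.cons hts Q2)).IsPath)
    (hs : H.Adj v0 s) (ht : H.Adj vk t) (hy : y ∈ Q1.support) :
    ∃ (z : V) (W : H.Walk y z), W.IsPath ∧
      W.length = Q1.length + Q2.length + 1 ∧
      W.support.Perm (Q1.append (Walk.cons hts Q2)).support := by
  obtain ⟨z, W, h1, h2, h3⟩ := rotate' (Q1.takeUntil y hy) (Q1.dropUntil y hy) hts Q2
    (by rw [Walk.take_spec]; exact hP) hs ht
  rw [Walk.take_spec] at h2 h3
  exact ⟨z, W, h1, h2, h3⟩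

lemma EG (H : SimpleGraph V) [DecidableRel H.Adj] (a : V) (δ c : ℕ)
    (hdeg : ∀ x, H.Reachable a x → δ ≤ (H.neighborFinset x).card)
    (s : Finset V) (hs : ∀ x ∈ s, H.Reachable a x) (hc : c ≤ s.card) :
    ∃ (u w : V) (p : H.Walk u w), p.IsPath ∧ min (c - 1) (2 * δ) ≤ p.length := by
  classical
  set M : Set ℕ := {l | ∃ (u w : V) (p : H.Walk u w), p.IsPath ∧ H.Reachable a u ∧ p.length = l}
    with hM
  have hne : M.Nonempty := ⟨0, a, a, Walk.nil, Walk.IsPath.nil, Reachable.refl a, rfl⟩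
  have hbdd : BddAbove M := by
    refine ⟨Fintype.card V, ?_⟩
    rintro l ⟨u, w, p, hp, _, rfl⟩
    exact hp.length_lt.le
  obtain ⟨u, w, P, hP, hau, hlen⟩ := Nat.sSup_mem hne hbdd
  have hmax : ∀ l ∈ M, l ≤ sSup M := fun l hl => le_csSup hbdd hl
  refine ⟨u, w, P, hP, ?_⟩
  by_contra hcon
  push_neg at hcon
  have hc1 : P.length < c - 1 := lt_of_lt_of_le hcon (min_le_left _ _)
  have hc2 : P.length < 2 * δ := lt_of_lt_of_le hcon (min_le_right _ _)
  have haw : H.Reachable a w := hau.trans ⟨P⟩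
  -- all neighbors of the endpoints lie on P
  have hNu : ∀ x, H.Adj u x → x ∈ P.support := by
    intro x hx
    by_contra hxs
    have hmem : P.length + 1 ∈ M :=
      ⟨x, w, Walk.cons hx.symm P, hP.cons hxs, hau.trans hx.reachable, by simp⟩
    have := hmax _ hmem
    omega
  have hNw : ∀ x, H.Adj w x → x ∈ P.support := by
    intro x hx
    by_contra hxs
    have hxs' : x ∉ P.reverse.support := by
      rwa [Walk.support_reverse, List.mem_reverse]
    have hmem : P.length + 1 ∈ M :=
      ⟨u, x, (Walk.cons hx.symm P.reverse).reverse, (hP.reverse.cons hxs').reverse, hau, by simp⟩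
    have := hmax _ hmem
    omega
  -- index function
  have hmemsup : ∀ x ∈ P.support, ∃ n, P.getVert n = x ∧ n ≤ P.length := fun x hx =>
    Walk.mem_support_iff_exists_getVert.mp hx
  set f : V → ℕ := fun x => if hx : x ∈ P.support then (hmemsup x hx).choose else 0 with hf
  have hf1 : ∀ x (hx : x ∈ P.support), P.getVert (f x) = x := by
    intro x hx
    simp only [hf, dif_pos hx]
    exact (hmemsup x hx).choose_spec.1
  have hf2 : ∀ x (hx : x ∈ P.support), f x ≤ P.length := by
    intro x hx
    simp only [hf, dif_pos hx]
    exact (hmemsup x hx).choose_spec.2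
  have hdu : δ ≤ (H.neighborFinset u).card := hdeg u hau
  have hdw : δ ≤ (H.neighborFinset w).card := hdeg w haw
  have hfu : ∀ x ∈ H.neighborFinset u, 1 ≤ f x ∧ f x ≤ P.length := by
    intro x hx
    rw [mem_neighborFinset] at hx
    have hxs := hNu x hx
    refine ⟨?_, hf2 x hxs⟩
    by_contra h0
    push_neg at h0
    have h00 : f x = 0 := by omega
    have : P.getVert 0 = x := by rw [← h00]; exact hf1 x hxs
    rw [Walk.getVert_zero] at this
    rw [← this] at hx
    exact H.loopless.irrefl u hx
  have hfw : ∀ x ∈ H.neighborFinset w, f x < P.length := by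
    intro x hx
    rw [mem_neighborFinset] at hx
    have hxs := hNw x hx
    have hle := hf2 x hxs
    rcases lt_or_eq_of_le hle with h | h
    · exact h
    · exfalso
      have : P.getVert (f x) = x := hf1 x hxs
      rw [h, Walk.getVert_length] at this
      rw [← this] at hx
      exact H.loopless.irrefl w hx
  set A : Finset ℕ := (H.neighborFinset u).image (fun x => f x - 1) with hA
  set Bk : Finset ℕ := (H.neighborFinset w).image f with hBk
  have hAcard : (H.neighborFinset u).card = A.card := by
    rw [hA]
    refine (Finset.card_image_of_injOn ?_).symm
    intro x hx x' hx' hxx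
    have h1 := hfu x hx
    have h2 := hfu x' hx'
    have hxx' : f x - 1 = f x' - 1 := hxx
    have : f x = f x' := by omega
    simp only [Finset.mem_coe, mem_neighborFinset] at hx hx'
    rw [← hf1 x (hNu x hx), ← hf1 x' (hNu x' hx'), this]
  have hBcard : (H.neighborFinset w).card = Bk.card := by
    rw [hBk]
    refine (Finset.card_image_of_injOn ?_).symm
    intro x hx x' hx' hxx
    simp only [Finset.mem_coe, mem_neighborFinset] at hx hx'
    rw [← hf1 x (hNw x hx), ← hf1 x' (hNw x' hx'), hxx]
  have hArange : A ⊆ Finset.range P.length := by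
    intro i hi
    rw [hA, Finset.mem_image] at hi
    obtain ⟨x, hx, rfl⟩ := hi
    have := hfu x hx
    rw [Finset.mem_range]
    omega
  have hBrange : Bk ⊆ Finset.range P.length := by
    intro i hi
    rw [hBk, Finset.mem_image] at hi
    obtain ⟨x, hx, rfl⟩ := hi
    rw [Finset.mem_range]
    exact hfw x hx
  have hunion : (A ∪ Bk).card ≤ P.length := by
    calc (A ∪ Bk).card ≤ (Finset.range P.length).card :=
          Finset.card_le_card (Finset.union_subset hArange hBrange)
    _ = P.length := Finset.card_range _
  have hcui := Finset.card_union_add_card_inter A Bk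
  have hinter : (A ∩ Bk).Nonempty := by
    rw [← Finset.card_pos]
    omega
  obtain ⟨i, hi⟩ := hinter
  rw [Finset.mem_inter] at hi
  have hiA := hi.1
  have hiB := hi.2
  have hilt : i < P.length := by
    have := hArange hiA
    rwa [Finset.mem_range] at this
  -- the two chords
  have hs_adj : H.Adj u (P.getVert (i + 1)) := by
    rw [hA, Finset.mem_image] at hiA
    obtain ⟨x, hx, hfx⟩ := hiA
    have h1 := hfu x hx
    have hfx' : f x - 1 = i := hfx
    have hfi : f x = i + 1 := by omega
    rw [mem_neighborFinset] at hx
    have hgv : P.getVert (i + 1) = x := by rw [← hfi]; exact hf1 x (hNu x hx)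
    rwa [hgv]
  have ht_adj : H.Adj w (P.getVert i) := by
    rw [hBk, Finset.mem_image] at hiB
    obtain ⟨x, hx, hfx⟩ := hiB
    rw [mem_neighborFinset] at hx
    have hgv : P.getVert i = x := by rw [← hfx]; exact hf1 x (hNw x hx)
    rwa [hgv]
  -- a vertex outside the path
  have hx0 : ∃ x0 ∈ s, x0 ∉ P.support := by
    by_contra hall
    push_neg at hall
    have hsub : s ⊆ P.support.toFinset := fun x hx => List.mem_toFinset.mpr (hall x hx)
    have h1 := Finset.card_le_card hsub
    have h2 : P.support.toFinset.card ≤ P.support.length := List.toFinset_card_le _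
    rw [Walk.length_support] at h2
    omega
  obtain ⟨x0, hx0s, hx0P⟩ := hx0
  have hrx0 : H.Reachable a x0 := hs x0 hx0s
  have hx0u : H.Reachable x0 u := hrx0.symm.trans hau
  obtain ⟨W0⟩ := hx0u
  obtain ⟨y, R, hR, hyP, hfirst, _, hRlen⟩ :=
    exists_prefix H P.support W0.bypass W0.bypass_isPath hx0P (Walk.start_mem_support P)
  -- decompose P at t := P.getVert i
  obtain ⟨t, ht_eq⟩ : ∃ t, P.getVert i = t := ⟨_, rfl⟩
  rw [ht_eq] at ht_adj
  have htmem : t ∈ P.support := Walk.mem_support_iff_exists_getVert.mpr ⟨i, ht_eq, by omega⟩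
  obtain ⟨Q1, D, hspec, hQ1tu⟩ :
      ∃ (Q1 : H.Walk u t) (D : H.Walk t w), Q1.append D = P ∧ Q1 = P.takeUntil t htmem :=
    ⟨_, _, P.take_spec htmem, rfl⟩
  have hQ1le : Q1.length ≤ P.length := by rw [hQ1tu]; exact Walk.length_takeUntil_le _ _
  cases D with
  | nil => exact H.loopless.irrefl _ ht_adj
  | @cons _ b _ hadj Q2 =>
    -- identify Q1.length = i and b = P.getVert (i+1)
    have e1 : P.getVert Q1.length = t := by
      rw [← hspec, Walk.getVert_append]
      simp
    have hQ1len : Q1.length = i :=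
      getVert_inj P hP Q1.length i hQ1le (by omega) (e1.trans ht_eq.symm)
    have e3 : P.getVert (i + 1) = b := by
      rw [← hspec, Walk.getVert_append, if_neg (by omega), hQ1len]
      simp only [Nat.add_sub_cancel_left]
      exact (Walk.getVert_cons_succ _ _).trans (Walk.getVert_zero _)
    rw [e3] at hs_adj
    -- split on the position of y
    have hysplit : y ∈ Q1.support ∨ y ∈ Q2.support := by
      have hyP' : y ∈ P.support := hyP
      rw [← hspec, Walk.mem_support_append_iff] at hyP'
      rcases hyP' with h | h
      · exact Or.inl h
      · rw [Walk.support_cons] at h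
        rcases List.mem_cons.mp h with rfl | h'
        · exact Or.inl (Walk.end_mem_support Q1)
        · exact Or.inr h'
    have hPappend : (Q1.append (Walk.cons hadj Q2)).IsPath := by rw [hspec]; exact hP
    have hkey : ∃ (z : V) (W : H.Walk y z), W.IsPath ∧ W.length = P.length ∧
        W.support.Perm P.support := by
      rcases hysplit with hy1 | hy2
      · obtain ⟨z, W, h1, h2, h3⟩ := rotate Q1 hadj Q2 hPappend hs_adj ht_adj hy1
        refine ⟨z, W, h1, ?_, by rw [← hspec]; exact h3⟩
        rw [← hspec, Walk.length_append, Walk.length_cons]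
        omega
      · have heqrev : (Q1.append (Walk.cons hadj Q2)).reverse =
            Q2.reverse.append (Walk.cons hadj.symm Q1.reverse) := by
          rw [Walk.reverse_append, Walk.reverse_cons, ← Walk.append_assoc, Walk.cons_nil_append]
        have hPrev : (Q2.reverse.append (Walk.cons hadj.symm Q1.reverse)).IsPath := by
          rw [← heqrev]
          exact hPappend.reverse
        have hy2' : y ∈ Q2.reverse.support := by
          rw [Walk.support_reverse, List.mem_reverse]
          exact hy2
        obtain ⟨z, W, h1, h2, h3⟩ := rotate Q2.reverse hadj.symm Q1.reverse hPrev ht_adj hs_adj hy2'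
        refine ⟨z, W, h1, ?_, ?_⟩
        · rw [← hspec, Walk.length_append, Walk.length_cons]
          rw [Walk.length_reverse, Walk.length_reverse] at h2
          omega
        · have h4 : W.support.Perm (Q1.append (Walk.cons hadj Q2)).reverse.support := by
            rw [heqrev]
            exact h3
          rw [Walk.support_reverse] at h4
          refine h4.trans ?_
          rw [← hspec]
          exact List.reverse_perm _
    obtain ⟨z, W, hW, hWlen, hWperm⟩ := hkey
    -- assemble the longer path
    have hNpath : (R.append W).IsPath := by
      rw [Walk.isPath_def, Walk.support_append]
      refine List.Nodup.append (Walk.isPath_def _ |>.mp hR) ?_ ?_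
      · exact (List.tail_sublist _).nodup (Walk.isPath_def _ |>.mp hW)
      · intro z1 hz1 hz1'
        have hz1W : z1 ∈ W.support := List.mem_of_mem_tail hz1'
        have hz1P : z1 ∈ P.support := hWperm.mem_iff.mp hz1W
        have hz1y : z1 = y := hfirst z1 hz1 hz1P
        subst hz1y
        have := Walk.isPath_def _ |>.mp hW
        rw [Walk.support_eq_cons] at this
        exact (List.nodup_cons.mp this).1 hz1'
    have hmem : (R.append W).length ∈ M := ⟨x0, z, R.append W, hNpath, hrx0, rfl⟩
    have hle := hmax _ hmem
    rw [Walk.length_append] at hle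
    omega




def Hg (G : SimpleGraph V) [DecidableRel G.Adj] (B : Finset V) : SimpleGraph V where
  Adj x y := x ∉ B ∧ y ∉ B ∧ G.Adj x y
  symm := ⟨by rintro x y ⟨h1, h2, h3⟩; exact ⟨h2, h1, h3.symm⟩⟩
  loopless := ⟨fun x h => G.loopless.irrefl x h.2.2⟩

instance (G : SimpleGraph V) [DecidableRel G.Adj] (B : Finset V) :
    DecidableRel (Hg G B).Adj := fun x y =>
  inferInstanceAs (Decidable (x ∉ B ∧ y ∉ B ∧ G.Adj x y))

lemma greedy (H : SimpleGraph V) [DecidableRel H.Adj] (u : V) (δ : ℕ)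
    (hdeg : ∀ x, H.Reachable x u → δ ≤ (H.neighborFinset x).card) :
    ∃ (w : V) (p : H.Walk w u), p.IsPath ∧ δ ≤ p.length := by
  obtain ⟨w, p, hp, hall⟩ := exists_terminal_path H u
  refine ⟨w, p, hp, ?_⟩
  have hrw : H.Reachable w u := ⟨p⟩
  have hsub : H.neighborFinset w ⊆ p.support.toFinset.erase w := by
    intro x hx
    rw [mem_neighborFinset] at hx
    rw [Finset.mem_erase]
    exact ⟨fun h => H.loopless.irrefl w (h ▸ hx), List.mem_toFinset.mpr (hall x hx)⟩
  have h1 := Finset.card_le_card hsub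
  have h2 : (p.support.toFinset.erase w).card = p.support.toFinset.card - 1 :=
    Finset.card_erase_of_mem (List.mem_toFinset.mpr (Walk.start_mem_support p))
  have h3 : p.support.toFinset.card = p.support.length :=
    List.toFinset_card_of_nodup (Walk.isPath_def _ |>.mp hp)
  rw [Walk.length_support] at h3
  have h4 := hdeg w hrw
  omega

lemma crossing (G : SimpleGraph V) [DecidableRel G.Adj] (B : Finset V) (hconn : G.Connected)
    {a b : V} (ha : a ∉ B) (hb : b ∉ B) (hnr : ¬ (Hg G B).Reachable a b) :
    ∃ (u u' : V) (q : G.Walk u u'), q.IsPath ∧ u ∉ B ∧ u' ∉ B ∧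
      ¬ (Hg G B).Reachable u u' ∧ 1 ≤ q.length ∧
      (∀ z ∈ q.support, z = u ∨ z = u' ∨ z ∈ B) := by
  classical
  set S : Set ℕ :=
    {d | ∃ u u', u ∉ B ∧ u' ∉ B ∧ ¬ (Hg G B).Reachable u u' ∧ G.dist u u' = d} with hS
  have hne : S.Nonempty := ⟨G.dist a b, a, b, ha, hb, hnr, rfl⟩
  obtain ⟨u, u', hu, hu', hnr', hdist⟩ := Nat.sInf_mem hne
  obtain ⟨q, hq, hqlen⟩ := (hconn.preconnected u u').exists_path_of_dist
  have hq1 : 1 ≤ q.length := by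
    by_contra h
    push_neg at h
    have h0 : q.length = 0 := by omega
    exact hnr' ((Walk.eq_of_length_eq_zero h0) ▸ Reachable.refl u)
  refine ⟨u, u', q, hq, hu, hu', hnr', hq1, ?_⟩
  intro z hz
  by_contra hcon
  push_neg at hcon
  obtain ⟨hzu, hzu', hzB⟩ := hcon
  have hsum := congrArg Walk.length (q.take_spec hz)
  rw [Walk.length_append] at hsum
  have hd1 : 1 ≤ (q.dropUntil z hz).length := by
    by_contra h
    push_neg at h
    have h0 : (q.dropUntil z hz).length = 0 := by omega
    exact hzu' (Walk.eq_of_length_eq_zero h0)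
  have ht1 : 1 ≤ (q.takeUntil z hz).length := by
    by_contra h
    push_neg at h
    have h0 : (q.takeUntil z hz).length = 0 := by omega
    exact hzu (Walk.eq_of_length_eq_zero h0).symm
  by_cases hreach : (Hg G B).Reachable u z
  · have hnz : ¬ (Hg G B).Reachable z u' := fun h => hnr' (hreach.trans h)
    have hmem : G.dist z u' ∈ S := ⟨z, u', hzB, hu', hnz, rfl⟩
    have hle1 : sInf S ≤ G.dist z u' := Nat.sInf_le hmem
    have hle2 : G.dist z u' ≤ (q.dropUntil z hz).length := dist_le _
    omega
  · have hmem : G.dist u z ∈ S := ⟨u, z, hu, hzB, hreach, rfl⟩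
    have hle1 : sInf S ≤ G.dist u z := Nat.sInf_le hmem
    have hle2 : G.dist u z ≤ (q.takeUntil z hz).length := dist_le _
    omega

lemma mapLe_support {H G : SimpleGraph V} (hle : H ≤ G) {u v : V} (p : H.Walk u v) :
    (p.mapLe hle).support = p.support := by
  simp only [Walk.mapLe, Walk.support_map, Hom.ofLE]
  exact List.map_id _

lemma mapLe_length {H G : SimpleGraph V} (hle : H ≤ G) {u v : V} (p : H.Walk u v) :
    (p.mapLe hle).length = p.length := Walk.length_map _ _

lemma mapLe_isPath {H G : SimpleGraph V} (hle : H ≤ G) {u v : V} {p : H.Walk u v}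
    (hp : p.IsPath) : (p.mapLe hle).IsPath :=
  Walk.map_isPath_of_injective (fun _ _ h => h) hp

lemma reach_notB {G : SimpleGraph V} [DecidableRel G.Adj] {B : Finset V} {z x : V}
    (hx : x ∉ B) (h : (Hg G B).Reachable z x) : z ∉ B := by
  obtain ⟨w⟩ := h
  cases w with
  | nil => exact hx
  | cons h' _ => exact h'.1


end StmtAux


/-- `deltaB G B` is the minimum degree of the induced subgraph `G - B`. -/
noncomputable def deltaB {V : Type*} [Fintype V] [DecidableEq V] (G : SimpleGraph V)
    [DecidableRel G.Adj] (B : Finset V) : ℕ :=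
  sInf { d : ℕ | ∃ v, v ∉ B ∧ ((G.neighborFinset v).filter (· ∉ B)).card = d }

/-- Let `G` be a connected `n`-vertex graph and `B ⊆ V(G)` with `V(G) \ B` nonempty.
Then `G` contains a simple path of length at least `min {n − |B| − 1, 2δ(G − B)}`. -/
theorem stmt_4 {V : Type*} [Fintype V] [DecidableEq V] (G : SimpleGraph V)
    [DecidableRel G.Adj] (B : Finset V) (hconn : G.Connected)
    (hB : (Bᶜ : Finset V).Nonempty) :
    ∃ (u w : V) (p : G.Walk u w), p.IsPath ∧
      min (Fintype.card V - B.card - 1) (2 * deltaB G B) ≤ p.length := by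
  classical
  obtain ⟨a, haB'⟩ := hB
  have ha : a ∉ B := Finset.mem_compl.mp haB'
  set H := StmtAux.Hg G B with hH
  have hle : H ≤ G := fun x y h => h.2.2
  have hAdjIff : ∀ x y, H.Adj x y ↔ (x ∉ B ∧ y ∉ B ∧ G.Adj x y) := fun x y => Iff.rfl
  have hdegB : ∀ x, x ∉ B → deltaB G B ≤ (H.neighborFinset x).card := by
    intro x hx
    unfold deltaB
    refine Nat.sInf_le ⟨x, hx, ?_⟩
    congr 1
    ext y
    simp only [Finset.mem_filter, mem_neighborFinset, hAdjIff]
    constructor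
    · rintro ⟨h1, h2⟩; exact ⟨hx, h2, h1⟩
    · rintro ⟨h1, h2, h3⟩; exact ⟨h3, h2⟩
  by_cases hcase : ∀ x y, x ∉ B → y ∉ B → H.Reachable x y
  · obtain ⟨u, w, p, hp, hplen⟩ := StmtAux.EG H a (deltaB G B) (Fintype.card V - B.card)
      (fun x hx => hdegB x (StmtAux.reach_notB ha hx.symm))
      Bᶜ (fun x hx => hcase a x ha (Finset.mem_compl.mp hx))
      (le_of_eq (Finset.card_compl B).symm)
    refine ⟨u, w, p.mapLe hle, StmtAux.mapLe_isPath hle hp, ?_⟩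
    rw [StmtAux.mapLe_length hle]
    exact hplen
  · push_neg at hcase
    obtain ⟨x1, y1, hx1, hy1, hnr⟩ := hcase
    obtain ⟨u, u', q, hq, hu, hu', hnr', hq1, hint⟩ := StmtAux.crossing G B hconn hx1 hy1 hnr
    obtain ⟨w1, p1, hp1, hp1len⟩ := StmtAux.greedy H u (deltaB G B)
      (fun z hz => hdegB z (StmtAux.reach_notB hu hz))
    obtain ⟨w2, p2, hp2, hp2len⟩ := StmtAux.greedy H u' (deltaB G B)
      (fun z hz => hdegB z (StmtAux.reach_notB hu' hz))
    have hp1reach : ∀ z ∈ p1.support, H.Reachable z u := fun z hz => ⟨p1.dropUntil z hz⟩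
    have hp2reach : ∀ z ∈ p2.support, H.Reachable z u' := fun z hz => ⟨p2.dropUntil z hz⟩
    have hp1B : ∀ z ∈ p1.support, z ∉ B := fun z hz => StmtAux.reach_notB hu (hp1reach z hz)
    have hp2B : ∀ z ∈ p2.support, z ∉ B := fun z hz => StmtAux.reach_notB hu' (hp2reach z hz)
    have hd12 : ∀ z ∈ p1.support, z ∈ p2.support → False := fun z hz1 hz2 =>
      hnr' ((hp1reach z hz1).symm.trans (hp2reach z hz2))
    refine ⟨w1, w2, (p1.mapLe hle).append (q.append (p2.reverse.mapLe hle)), ?_, ?_⟩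
    · rw [Walk.isPath_def, Walk.support_append, Walk.tail_support_append,
        StmtAux.mapLe_support, StmtAux.mapLe_support]
      have n1 : p1.support.Nodup := (Walk.isPath_def _).mp hp1
      have n2 : q.support.tail.Nodup := (List.tail_sublist _).nodup ((Walk.isPath_def _).mp hq)
      have n3 : p2.reverse.support.tail.Nodup :=
        (List.tail_sublist _).nodup ((Walk.isPath_def _).mp hp2.reverse)
      have hmem3 : ∀ z ∈ p2.reverse.support.tail, z ∈ p2.support := by
        intro z hz
        have := List.mem_of_mem_tail hz
        rwa [Walk.support_reverse, List.mem_reverse] at this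
      refine List.Nodup.append n1 (List.Nodup.append n2 n3 ?_) ?_
      · -- q.support.tail disjoint from p2.reverse.support.tail
        intro z hz2 hz3
        have hzq : z ∈ q.support := List.mem_of_mem_tail hz2
        have hzp2 : z ∈ p2.support := hmem3 z hz3
        rcases hint z hzq with rfl | rfl | hzB
        · exact hnr' (hp2reach z hzp2)
        · have hnd := (Walk.isPath_def _).mp hp2.reverse
          rw [Walk.support_eq_cons] at hnd
          exact (List.nodup_cons.mp hnd).1 hz3
        · exact hp2B z hzp2 hzB
      · -- p1.support disjoint from the rest
        intro z hz1 hz23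
        rcases List.mem_append.mp hz23 with hz2 | hz3
        · have hzq : z ∈ q.support := List.mem_of_mem_tail hz2
          rcases hint z hzq with rfl | rfl | hzB
          · have hnd := (Walk.isPath_def _).mp hq
            rw [Walk.support_eq_cons] at hnd
            exact (List.nodup_cons.mp hnd).1 hz2
          · exact hnr' ((hp1reach z hz1).symm)
          · exact hp1B z hz1 hzB
        · exact hd12 z hz1 (hmem3 z hz3)
    · rw [Walk.length_append, Walk.length_append, StmtAux.mapLe_length, StmtAux.mapLe_length,
        Walk.length_reverse]
      have hmin := min_le_right (Fintype.card V - B.card - 1) (2 * deltaB G B)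
      omega
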